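/- Let L be a compact self-adjoint nonnegative operator on a Hilbert space with ‖L‖ ≤ C₁, and let φ* = L^{β/2} w with ‖w‖ ≤ R for some β > 0. Define φ_λ = (L² + λI)^{-1} L² φ*. Then ‖φ_λ − φ*‖ ≤ C(β,C₁) R λ^{min{β/4,1}}, where C(β,C₁) = (β/4)^{β/4}(1−β/4)^{1−β/4} if 0 < β ≤ 4 and C(β,C₁) = C₁^{β/2−2} if β > 4. -/

import Mathlib

open ContinuousLinearMap

lemma key_scalar {C₁ β lam t : ℝ} (hC : 0 < C₁) (hβ : 0 < β) (hlam : 0 < lam)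
    (ht : 0 ≤ t) (htC : t ≤ C₁) :
    lam * t ^ (β / 2) / (t ^ 2 + lam) ≤
      (if β ≤ 4 then (β / 4) ^ (β / 4) * (1 - β / 4) ^ (1 - β / 4)
       else C₁ ^ (β / 2 - 2)) * lam ^ min (β / 4) 1 := by
  have hs0 : 0 ≤ t ^ 2 := sq_nonneg t
  have hsl : 0 < t ^ 2 + lam := by positivity
  have hts : t ^ (β / 2) = (t ^ 2) ^ (β / 4) := by
    rw [← Real.rpow_natCast t 2, ← Real.rpow_mul ht]
    congr 1
    push_cast; ring
  rw [hts]
  set s : ℝ := t ^ 2 with hs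
  by_cases hb4 : β ≤ 4
  · rw [if_pos hb4, min_eq_left (by linarith : β / 4 ≤ 1)]
    set a : ℝ := β / 4 with ha
    have ha0 : 0 < a := by positivity
    have ha1 : a ≤ 1 := by rw [ha]; linarith
    rw [div_le_iff₀ hsl]
    have hkey : s ^ a * lam ^ (1 - a) ≤ a ^ a * (1 - a) ^ (1 - a) * (s + lam) := by
      rcases eq_or_lt_of_le ha1 with h1 | h1
      · rw [h1, Real.rpow_one, sub_self, Real.rpow_zero, Real.one_rpow, mul_one, one_mul]
        nlinarith [Real.rpow_nonneg (le_refl (0:ℝ)) (0:ℝ), Real.rpow_zero (0:ℝ)]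
      · have h1a : 0 < 1 - a := by linarith
        have amg := Real.geom_mean_le_arith_mean2_weighted ha0.le h1a.le
          (div_nonneg hs0 ha0.le) (div_nonneg hlam.le h1a.le) (by ring)
        have heq : a * (s / a) + (1 - a) * (lam / (1 - a)) = s + lam := by
          field_simp
        rw [heq] at amg
        have expand : s ^ a * lam ^ (1 - a) =
            a ^ a * (1 - a) ^ (1 - a) * ((s / a) ^ a * (lam / (1 - a)) ^ (1 - a)) := by
          rw [Real.div_rpow hs0 ha0.le, Real.div_rpow hlam.le h1a.le]
          have h1 : (0:ℝ) < a ^ a := Real.rpow_pos_of_pos ha0 a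
          have h2 : (0:ℝ) < (1 - a) ^ (1 - a) := Real.rpow_pos_of_pos h1a (1 - a)
          field_simp
        rw [expand]
        exact mul_le_mul_of_nonneg_left amg (by positivity)
    calc lam * s ^ a = s ^ a * lam ^ (1 - a) * lam ^ a := by
          rw [mul_assoc, ← Real.rpow_add hlam]
          norm_num
          ring
      _ ≤ a ^ a * (1 - a) ^ (1 - a) * (s + lam) * lam ^ a :=
          mul_le_mul_of_nonneg_right hkey (Real.rpow_nonneg hlam.le a)
      _ = a ^ a * (1 - a) ^ (1 - a) * lam ^ a * (s + lam) := by ring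
  · rw [if_neg hb4]
    push_neg at hb4
    rw [min_eq_right (by linarith : (1:ℝ) ≤ β / 4), Real.rpow_one, div_le_iff₀ hsl]
    rcases eq_or_lt_of_le hs0 with h0 | h0
    · rw [← h0, Real.zero_rpow (by positivity)]
      have h0' : (0:ℝ) = s := h0
      nlinarith [mul_pos (mul_pos (Real.rpow_pos_of_pos hC (β / 2 - 2)) hlam) hlam]
    · have h1 : s ^ (β / 4) ≤ C₁ ^ (β / 2 - 2) * s := by
        have he : s ^ (β / 4) = s ^ (β / 4 - 1) * s := by
          rw [← Real.rpow_add_one h0.ne' (β / 4 - 1)]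
          norm_num
        rw [he]
        apply mul_le_mul_of_nonneg_right _ h0.le
        have hsC : s ≤ C₁ ^ 2 := by
          rw [hs]; exact pow_le_pow_left₀ ht htC 2
        calc s ^ (β / 4 - 1) ≤ (C₁ ^ 2) ^ (β / 4 - 1) :=
              Real.rpow_le_rpow h0.le hsC (by linarith)
          _ = C₁ ^ (β / 2 - 2) := by
              rw [← Real.rpow_natCast C₁ 2, ← Real.rpow_mul hC.le]
              congr 1
              push_cast; ring
      calc lam * s ^ (β / 4) ≤ lam * (C₁ ^ (β / 2 - 2) * s) :=
            mul_le_mul_of_nonneg_left h1 hlam.le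
        _ ≤ C₁ ^ (β / 2 - 2) * lam * (s + lam) := by
            have hcp : 0 < C₁ ^ (β / 2 - 2) := Real.rpow_pos_of_pos hC _
            nlinarith [mul_pos (mul_pos hcp hlam) hlam]

lemma coeff_L {H : Type*} [NormedAddCommGroup H] [InnerProductSpace ℝ H] [CompleteSpace H]
    (L : H →L[ℝ] H) (e : HilbertBasis ℕ ℝ H) (σ : ℕ → ℝ)
    (hL : ∀ j, L (e j) = σ j • e j) (x : H) (j : ℕ) :
    (inner ℝ (e j) (L x) : ℝ) = σ j * (inner ℝ (e j) x : ℝ) := by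
  have h1 : HasSum (fun i => e.repr x i • e i) x := e.hasSum_repr x
  have h2 := (h1.mapL L).mapL (innerSL ℝ (e j))
  have h3 : (fun i => (innerSL ℝ (e j)) (L (e.repr x i • e i))) =
      fun i => if i = j then e.repr x j * σ j else 0 := by
    funext i
    have hon := orthonormal_iff_ite.mp e.orthonormal j i
    simp only [map_smul, hL, innerSL_apply_apply, inner_smul_right, smul_eq_mul, hon]
    rcases eq_or_ne i j with rfl | hij
    · simp
    · simp [Ne.symm hij, hij]
  rw [h3] at h2
  have h4 := h2.unique (hasSum_ite_eq j (e.repr x j * σ j))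
  simp only [innerSL_apply_apply] at h4
  rw [h4, e.repr_apply_apply]
  ring

theorem stmt17 {H : Type*} [NormedAddCommGroup H] [InnerProductSpace ℝ H] [CompleteSpace H]
    (L : H →L[ℝ] H) (C₁ β R lam : ℝ) (hC : 0 < C₁) (hβ : 0 < β) (hR : 0 ≤ R)
    (hlam : 0 < lam) (hLnorm : ‖L‖ ≤ C₁)
    (e : HilbertBasis ℕ ℝ H)
    (σ : ℕ → ℝ) (hσ : ∀ j, 0 ≤ σ j) (hL : ∀ j, L (e j) = σ j • e j)
    (w φstar φlam : H) (hw : ‖w‖ ≤ R)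
    (hsource : ∀ j, (inner ℝ φstar (e j) : ℝ) = σ j ^ (β / 2) * (inner ℝ w (e j) : ℝ))
    (hφlam : (L ∘L L + lam • ContinuousLinearMap.id ℝ H) φlam = (L ∘L L) φstar) :
    ‖φlam - φstar‖ ≤
      (if β ≤ 4 then (β / 4) ^ (β / 4) * (1 - β / 4) ^ (1 - β / 4)
       else C₁ ^ (β / 2 - 2)) * R * lam ^ min (β / 4) 1 := by
  set Cc : ℝ := (if β ≤ 4 then (β / 4) ^ (β / 4) * (1 - β / 4) ^ (1 - β / 4)
       else C₁ ^ (β / 2 - 2)) with hCc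
  have hCc0 : 0 ≤ Cc := by
    rw [hCc]
    split
    · have h1 : (0:ℝ) ≤ (β / 4) ^ (β / 4) := Real.rpow_nonneg (by positivity) _
      have h2 : (0:ℝ) ≤ (1 - β / 4) ^ (1 - β / 4) := Real.rpow_nonneg (by linarith) _
      positivity
    · exact Real.rpow_nonneg hC.le _
  set K : ℝ := Cc * lam ^ min (β / 4) 1 with hK
  have hK0 : 0 ≤ K := mul_nonneg hCc0 (Real.rpow_nonneg hlam.le _)
  -- eigenvalue bound
  have hσC : ∀ j, σ j ≤ C₁ := by
    intro j
    have hnorm1 : ‖e j‖ = 1 := e.orthonormal.1 j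
    have : ‖L (e j)‖ ≤ ‖L‖ * ‖e j‖ := L.le_opNorm _
    rw [hL j, norm_smul, hnorm1, mul_one, mul_one, Real.norm_eq_abs,
      abs_of_nonneg (hσ j)] at this
    linarith
  -- coefficient formula
  have hc : ∀ j, (inner ℝ (e j) (φlam - φstar) : ℝ) =
      -(lam * σ j ^ (β / 2) / (σ j ^ 2 + lam)) * (inner ℝ (e j) w : ℝ) := by
    intro j
    have hap := congrArg (fun y => (inner ℝ (e j) y : ℝ)) hφlam
    simp only [ContinuousLinearMap.add_apply, ContinuousLinearMap.comp_apply,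
      ContinuousLinearMap.smul_apply, ContinuousLinearMap.id_apply, inner_add_right,
      inner_smul_right, smul_eq_mul] at hap
    rw [coeff_L L e σ hL, coeff_L L e σ hL, coeff_L L e σ hL, coeff_L L e σ hL] at hap
    have hsrc : (inner ℝ (e j) φstar : ℝ) = σ j ^ (β / 2) * (inner ℝ (e j) w : ℝ) := by
      rw [real_inner_comm, hsource j, real_inner_comm w]
    have hpos : (0:ℝ) < σ j ^ 2 + lam := by positivity
    rw [hsrc] at hap
    rw [inner_sub_right, hsrc]
    field_simp
    linear_combination hap
  -- coefficient bound
  have hb : ∀ j, ((inner ℝ (e j) (φlam - φstar) : ℝ)) ^ 2 ≤ K ^ 2 * (inner ℝ (e j) w : ℝ) ^ 2 := by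
    intro j
    rw [hc j]
    have hfac : 0 ≤ lam * σ j ^ (β / 2) / (σ j ^ 2 + lam) :=
      div_nonneg (mul_nonneg hlam.le (Real.rpow_nonneg (hσ j) _)) (by positivity)
    have hle : lam * σ j ^ (β / 2) / (σ j ^ 2 + lam) ≤ K :=
      key_scalar hC hβ hlam (hσ j) (hσC j)
    have hsq : (-(lam * σ j ^ (β / 2) / (σ j ^ 2 + lam)) * (inner ℝ (e j) w : ℝ)) ^ 2 =
        (lam * σ j ^ (β / 2) / (σ j ^ 2 + lam)) ^ 2 * (inner ℝ (e j) w : ℝ) ^ 2 := by ring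
    rw [hsq]
    exact mul_le_mul_of_nonneg_right (pow_le_pow_left₀ hfac hle 2)
      (sq_nonneg _)
  -- Parseval
  have hu : HasSum (fun i => ((inner ℝ (e i) (φlam - φstar) : ℝ)) ^ 2)
      ((inner ℝ (φlam - φstar) (φlam - φstar) : ℝ)) := by
    have := e.hasSum_inner_mul_inner (φlam - φstar) (φlam - φstar)
    convert this using 2 with i
    · rfl
    rw [sq, real_inner_comm]
  have hw2 : HasSum (fun i => ((inner ℝ (e i) w : ℝ)) ^ 2) ((inner ℝ w w : ℝ)) := by
    have := e.hasSum_inner_mul_inner w w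
    convert this using 2 with i
    · rfl
    rw [sq, real_inner_comm]
  have hsum : (inner ℝ (φlam - φstar) (φlam - φstar) : ℝ) ≤ K ^ 2 * (inner ℝ w w : ℝ) :=
    hasSum_le hb hu (hw2.mul_left (K ^ 2))
  rw [real_inner_self_eq_norm_sq, real_inner_self_eq_norm_sq] at hsum
  have hfin : ‖φlam - φstar‖ ≤ K * R := by
    have h1 : ‖φlam - φstar‖ ^ 2 ≤ (K * R) ^ 2 := by
      have h2 : K ^ 2 * ‖w‖ ^ 2 ≤ K ^ 2 * R ^ 2 :=
        mul_le_mul_of_nonneg_left (pow_le_pow_left₀ (norm_nonneg w) hw 2) (sq_nonneg K)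
      have h2' : (K * R) ^ 2 = K ^ 2 * R ^ 2 := by ring
      linarith
    have h3 := Real.sqrt_le_sqrt h1
    rwa [Real.sqrt_sq (norm_nonneg _), Real.sqrt_sq (mul_nonneg hK0 hR)] at h3
  calc ‖φlam - φstar‖ ≤ K * R := hfin
    _ = Cc * R * lam ^ min (β / 4) 1 := by rw [hK]; ring
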